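/- arXiv:1708.05585 — 2 statements merged into one kernel-verified Lean document; each statement's English description precedes it below -/
import Mathlib

section
/- Let f(z) = ∑_{k=0}^∞ a_k z^k be analytic on the open unit disk D with |f(z)| ≤ 1 for all z ∈ D. Then for every r with 0 ≤ r < 1: ∑_{k=1}^∞ k |a_k|^2 r^{2k} ≤ (1 - |a_0|^2)^2 r^2 / (1 - r^2)^2. Equivalently, the area S_r of the image of |z| < r under f satisfies S_r/π ≤ (1 - |a_0|^2)^2 r^2/(1 - r^2)^2. -/
open Metric

/-- Coefficients of a power series converging on the unit ball are bounded at each radius. -/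
lemma coeff_bound (f : ℂ → ℂ) (a : ℕ → ℂ)
    (hsum : ∀ z ∈ ball (0:ℂ) 1, HasSum (fun k : ℕ => a k * z ^ k) (f z))
    (ρ : ℝ) (h0 : 0 ≤ ρ) (h1 : ρ < 1) :
    ∃ C : ℝ, ∀ n : ℕ, ‖a n‖ * ρ ^ n ≤ C := by
  have hmem : (ρ : ℂ) ∈ ball (0:ℂ) 1 := by
    simp [Complex.norm_of_nonneg h0, abs_of_nonneg h0, h1]
  have hs : Summable (fun n : ℕ => a n * (ρ:ℂ) ^ n) := (hsum _ hmem).summable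
  have ht : Filter.Tendsto (fun n : ℕ => ‖a n‖ * ρ ^ n)
      Filter.atTop (nhds 0) := by
    have := hs.tendsto_atTop_zero
    have h2 : Filter.Tendsto (fun n : ℕ => ‖a n * (ρ:ℂ) ^ n‖)
        Filter.atTop (nhds 0) := by
      simpa using (Filter.Tendsto.norm this)
    refine h2.congr fun n => ?_
    simp [norm_mul, norm_pow, Complex.norm_of_nonneg h0, abs_of_nonneg h0]
  obtain ⟨C, hC⟩ := ht.bddAbove_range
  exact ⟨C, fun n => hC ⟨n, rfl⟩⟩

/-- Möbius denominator inequality. -/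
lemma mobius_bound (u c : ℂ) (hu : Complex.normSq u ≤ 1) (hc : Complex.normSq c ≤ 1) :
    ‖u - c‖ ≤ ‖1 - (starRingEnd ℂ) c * u‖ := by
  rw [Complex.norm_def, Complex.norm_def]
  apply Real.sqrt_le_sqrt
  rw [Complex.normSq_apply, Complex.normSq_apply] at *
  simp only [Complex.sub_re, Complex.sub_im, Complex.one_re, Complex.one_im,
    Complex.mul_re, Complex.mul_im, Complex.conj_re, Complex.conj_im]
  nlinarith [mul_nonneg (by linarith : (0:ℝ) ≤ 1 - (c.re * c.re + c.im * c.im))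
    (by linarith : (0:ℝ) ≤ 1 - (u.re * u.re + u.im * u.im))]

lemma wiener (f : ℂ → ℂ) (a : ℕ → ℂ)
    (hsum : ∀ z ∈ ball (0:ℂ) 1, HasSum (fun k : ℕ => a k * z ^ k) (f z))
    (hbound : ∀ z ∈ ball (0:ℂ) 1, ‖f z‖ ≤ 1)
    (k : ℕ) (hk : 0 < k) :
    ‖a k‖ ≤ 1 - ‖a 0‖ ^ 2 := by
  set p : FormalMultilinearSeries ℂ ℂ ℂ :=
    FormalMultilinearSeries.ofScalars ℂ (fun m => a (k * m)) with hp
  -- radius at least 1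
  have hrad : 1 ≤ p.radius := by
    refine ENNReal.le_of_forall_nnreal_lt fun t ht => ?_
    have ht1 : (t:ℝ) < 1 := by exact_mod_cast ht
    have ht0 : (0:ℝ) ≤ t := t.coe_nonneg
    set s : ℝ := (t:ℝ) ^ ((k:ℝ)⁻¹) with hs
    have hs0 : 0 ≤ s := Real.rpow_nonneg ht0 _
    have hs1 : s < 1 := by
      rcases eq_or_lt_of_le ht0 with h | h
      · rw [hs, ← h, Real.zero_rpow (by positivity : ((k:ℝ)⁻¹) ≠ 0)]
        exact one_pos
      · exact Real.rpow_lt_one ht0 ht1 (by positivity)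
    obtain ⟨C, hC⟩ := coeff_bound f a hsum s hs0 hs1
    refine p.le_radius_of_bound C fun n => ?_
    have hnorm : ‖p n‖ = ‖a (k * n)‖ :=
      FormalMultilinearSeries.ofScalars_norm ℂ (fun m => a (k * m)) n
    have hpow : s ^ (k * n) = (t:ℝ) ^ n := by
      rw [hs, ← Real.rpow_natCast ((t:ℝ) ^ ((k:ℝ)⁻¹)) (k*n), ← Real.rpow_natCast (t:ℝ) n,
        ← Real.rpow_mul ht0]
      congr 1
      have hk' : (k:ℝ) ≠ 0 := Nat.cast_ne_zero.mpr hk.ne'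
      push_cast
      field_simp
    calc ‖p n‖ * (t:ℝ) ^ n = ‖a (k * n)‖ * s ^ (k * n) := by
          rw [hnorm, hpow]
      _ ≤ C := hC (k * n)
  have hrpos : 0 < p.radius := lt_of_lt_of_le one_pos hrad
  set h : ℂ → ℂ := p.sum with hh
  have hps : HasFPowerSeriesOnBall h p 0 1 :=
    (p.hasFPowerSeriesOnBall hrpos).mono one_pos hrad
  -- HasSum representation of h on the ball
  have hsum_h : ∀ w ∈ ball (0:ℂ) 1, HasSum (fun m : ℕ => a (k * m) * w ^ m) (h w) := by
    intro w hw
    have hw' : w ∈ Metric.eball (0:ℂ) 1 := by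
      rw [show (1:ENNReal) = ENNReal.ofReal 1 by simp, Metric.emetric_ball]
      exact hw
    have H := hps.hasSum (y := w) hw'
    simp only [zero_add] at H
    have He : (fun n : ℕ => p n fun _ => w) = fun n : ℕ => a (k * n) * w ^ n := by
      funext n
      rw [hp, FormalMultilinearSeries.ofScalars_apply_eq, smul_eq_mul]
    rwa [He] at H
  -- h 0 = a 0
  have h0ball : (0:ℂ) ∈ ball (0:ℂ) 1 := mem_ball_self one_pos
  have hzero_sum : ∀ (b : ℕ → ℂ) (S : ℂ), HasSum (fun n : ℕ => b n * (0:ℂ) ^ n) S → S = b 0 := by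
    intro b S hS
    have h2 : HasSum (fun n : ℕ => b n * (0:ℂ) ^ n) (b 0) := by
      have : (fun n : ℕ => b n * (0:ℂ) ^ n) = fun n => if n = 0 then b 0 else 0 := by
        funext n; cases n <;> simp
      rw [this]; exact hasSum_ite_eq 0 (b 0)
    exact hS.unique h2
  have hh0 : h 0 = a 0 := by
    have := hzero_sum (fun m => a (k * m)) (h 0) (hsum_h 0 h0ball)
    simpa using this
  have hf0 : f 0 = a 0 := hzero_sum a (f 0) (hsum 0 h0ball)
  -- deriv h 0 = a k
  have hderiv : deriv h 0 = a k := by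
    rw [hps.hasFPowerSeriesAt.deriv, hp, FormalMultilinearSeries.ofScalars_apply_eq,
      smul_eq_mul]
    simp
  -- |h| ≤ 1 on the ball
  have hhb : ∀ w ∈ ball (0:ℂ) 1, ‖h w‖ ≤ 1 := by
    intro w hw
    rcases eq_or_ne w 0 with rfl | hw0
    · rw [hh0, ← hf0]; exact hbound 0 h0ball
    · -- k-th root of w
      have hwa : ‖w‖ < 1 := by simpa using hw
      have hwa0 : 0 < ‖w‖ := by
        simpa using norm_pos_iff.mpr hw0
      set z : ℂ := Complex.exp (Complex.log w / k) with hz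
      have hzk : z ^ k = w := by
        rw [hz, ← Complex.exp_nat_mul]
        rw [mul_div_cancel₀ _ (by exact_mod_cast hk.ne' : (k:ℂ) ≠ 0)]
        exact Complex.exp_log hw0
      have hza : ‖z‖ < 1 := by
        rw [hz, Complex.norm_exp]
        rw [Real.exp_lt_one_iff]
        rw [Complex.div_natCast_re, Complex.log_re]
        exact div_neg_of_neg_of_pos (Real.log_neg hwa0 hwa) (by exact_mod_cast hk)
      set ζ : ℂ := Complex.exp (2 * Real.pi * Complex.I / k) with hzeta
      have hζa : ‖ζ‖ = 1 := by
        rw [hzeta, Complex.norm_exp]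
        have : (2 * Real.pi * Complex.I / k).re = 0 := by
          simp [Complex.div_re, Complex.mul_re, Complex.mul_im]
        rw [this, Real.exp_zero]
      have hζk : ζ ^ k = 1 := by
        rw [hzeta, ← Complex.exp_nat_mul,
          mul_div_cancel₀ _ (by exact_mod_cast hk.ne' : (k:ℂ) ≠ 0)]
        simpa using Complex.exp_int_mul_two_pi_mul_I 1
      have hζpow : ∀ n : ℕ, ¬ (k ∣ n) → ζ ^ n ≠ 1 := by
        intro n hn hcon
        rw [hzeta, ← Complex.exp_nat_mul, Complex.exp_eq_one_iff] at hcon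
        obtain ⟨m, hm⟩ := hcon
        apply hn
        have hk' : (k:ℂ) ≠ 0 := by exact_mod_cast hk.ne'
        have hpi : (2 * Real.pi * Complex.I : ℂ) ≠ 0 := by
          simp [Real.pi_ne_zero, Complex.I_ne_zero]
        have h2 : (n:ℂ) * (2 * Real.pi * Complex.I) = (m * k : ℂ) * (2 * Real.pi * Complex.I) := by
          field_simp at hm
          linear_combination (2 * Real.pi * Complex.I) * hm
        have h3 : (n:ℂ) = (m * k : ℂ) := mul_right_cancel₀ hpi h2
        have h4 : (n:ℤ) = m * k := by exact_mod_cast h3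
        have hm0 : 0 ≤ m := by nlinarith [h4, Int.natCast_nonneg n, Int.natCast_pos.mpr hk]
        refine ⟨m.toNat, ?_⟩
        have h5 : (n:ℤ) = (k:ℤ) * m.toNat := by
          rw [Int.toNat_of_nonneg hm0]; linarith [h4]
        exact_mod_cast h5
      -- sum over rotated points
      have hrot : ∀ j : ℕ, ζ ^ j * z ∈ ball (0:ℂ) 1 := by
        intro j
        simp only [mem_ball, dist_zero_right, norm_mul, norm_pow, hζa,
          one_pow, one_mul]
        exact hza
      have S1 : HasSum (fun n : ℕ => ∑ j ∈ Finset.range k, a n * (ζ ^ j * z) ^ n)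
          (∑ j ∈ Finset.range k, f (ζ ^ j * z)) :=
        hasSum_sum fun j _ => hsum _ (hrot j)
      -- pointwise evaluation of the inner sum
      have hpt : ∀ n : ℕ, (∑ j ∈ Finset.range k, a n * (ζ ^ j * z) ^ n)
          = if k ∣ n then (k : ℂ) * (a n * z ^ n) else 0 := by
        intro n
        have : ∀ j : ℕ, a n * (ζ ^ j * z) ^ n = a n * z ^ n * (ζ ^ n) ^ j := by
          intro j; ring
        rw [Finset.sum_congr rfl fun j _ => this j, ← Finset.mul_sum]
        by_cases hd : k ∣ n
        · obtain ⟨m, rfl⟩ := hd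
          have h1 : ζ ^ (k * m) = 1 := by rw [pow_mul, hζk, one_pow]
          rw [h1, if_pos (dvd_mul_right k m)]
          simp only [one_pow, Finset.sum_const, Finset.card_range, nsmul_eq_mul, mul_one]
          ring
        · have hne : ζ ^ n ≠ 1 := hζpow n hd
          rw [geom_sum_eq hne]
          have : (ζ ^ n) ^ k = 1 := by
            rw [← pow_mul, mul_comm, pow_mul, hζk, one_pow]
          rw [this]
          simp [hd]
      have S1' : HasSum (fun n : ℕ => if k ∣ n then (k : ℂ) * (a n * z ^ n) else 0)
          (∑ j ∈ Finset.range k, f (ζ ^ j * z)) := by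
        have heq : (fun n : ℕ => ∑ j ∈ Finset.range k, a n * (ζ ^ j * z) ^ n)
            = fun n : ℕ => if k ∣ n then (k : ℂ) * (a n * z ^ n) else 0 := funext hpt
        rwa [heq] at S1
      -- the same series sums to k * h w
      have S2 : HasSum (fun n : ℕ => if k ∣ n then (k : ℂ) * (a n * z ^ n) else 0)
          ((k : ℂ) * h w) := by
        have hinj : Function.Injective (fun m : ℕ => k * m) := fun x y hxy =>
          Nat.eq_of_mul_eq_mul_left hk hxy
        have hvanish : ∀ n, n ∉ Set.range (fun m : ℕ => k * m) →
            (if k ∣ n then (k : ℂ) * (a n * z ^ n) else 0) = 0 := by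
          intro n hn
          have : ¬ k ∣ n := fun ⟨m, hm⟩ => hn ⟨m, hm.symm⟩
          simp [this]
        rw [← Function.Injective.hasSum_iff hinj hvanish]
        have H2 := ((hsum_h w hw).mul_left (k : ℂ))
        have heq2 : (fun m : ℕ => (k:ℂ) * (a (k * m) * w ^ m))
            = (fun n : ℕ => if k ∣ n then (k : ℂ) * (a n * z ^ n) else 0) ∘ (fun m : ℕ => k * m) := by
          funext m
          simp only [Function.comp_apply, if_pos (dvd_mul_right k m)]
          rw [← hzk, ← pow_mul]
        rwa [heq2] at H2
      have hkey : (∑ j ∈ Finset.range k, f (ζ ^ j * z)) = (k : ℂ) * h w := S1'.unique S2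
      -- conclude
      have habs : (k : ℝ) * ‖h w‖ ≤ (k : ℝ) * 1 := by
        calc (k : ℝ) * ‖h w‖ = ‖(k : ℂ) * h w‖ := by
              simp [map_mul]
          _ = ‖∑ j ∈ Finset.range k, f (ζ ^ j * z)‖ := by rw [hkey]
          _ ≤ ∑ j ∈ Finset.range k, ‖f (ζ ^ j * z)‖ := by
              simpa using
                norm_sum_le (Finset.range k) (fun j => f (ζ ^ j * z))
          _ ≤ ∑ j ∈ Finset.range k, 1 := Finset.sum_le_sum fun j _ => hbound _ (hrot j)
          _ = (k : ℝ) * 1 := by simp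
      have : (0:ℝ) < k := by exact_mod_cast hk
      linarith [le_of_mul_le_mul_left habs this]
  -- now the Schwarz--Pick step
  have ha0 : ‖a 0‖ ≤ 1 := by rw [← hf0]; exact hbound 0 h0ball
  have hdiff : DifferentiableOn ℂ h (ball (0:ℂ) 1) := by
    have := hps.differentiableOn
    rwa [show (Metric.eball (0:ℂ) 1) = ball (0:ℂ) 1 by
      rw [show (1:ENNReal) = ENNReal.ofReal 1 by simp, Metric.emetric_ball]] at this
  by_cases hc : ‖a 0‖ = 1
  · -- maximum modulus: h is constant, so a k = deriv h 0 = 0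
    have hmax : IsMaxOn (norm ∘ h) (ball (0:ℂ) 1) 0 := by
      intro w hw
      simp only [Function.comp_apply, hh0, hc]
      exact hhb w hw
    have heq := Complex.eqOn_of_isPreconnected_of_isMaxOn_norm
      (convex_ball (0:ℂ) 1).isPreconnected isOpen_ball hdiff h0ball hmax
    have hd0 : deriv h 0 = 0 := by
      have hev : h =ᶠ[nhds 0] fun _ => h 0 := by
        filter_upwards [isOpen_ball.mem_nhds h0ball] with x hx
        simpa using heq hx
      rw [hev.deriv_eq]
      simp
    rw [hderiv] at hd0
    rw [hd0, hc]
    simp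
  · have hc1 : ‖a 0‖ < 1 := lt_of_le_of_ne ha0 hc
    set c : ℂ := a 0 with hcdef
    have hnsq : Complex.normSq c < 1 := by
      rw [Complex.normSq_eq_norm_sq]
      nlinarith [norm_nonneg c]
    set d : ℂ := 1 - (starRingEnd ℂ) c * c with hd
    have hdreal : d = ((1 - ‖c‖ ^ 2 : ℝ) : ℂ) := by
      rw [hd, Complex.ofReal_sub, Complex.ofReal_one, Complex.ofReal_pow]
      congr 1
      rw [mul_comm, Complex.mul_conj, Complex.normSq_eq_norm_sq]
      push_cast
      ring
    have hpos0 : 0 < 1 - ‖c‖ ^ 2 := by nlinarith [norm_nonneg c]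
    have hdne : d ≠ 0 := by
      rw [hdreal]
      exact Complex.ofReal_ne_zero.mpr hpos0.ne'
    have habsd : ‖d‖ = 1 - ‖c‖ ^ 2 := by
      rw [hdreal, Complex.norm_real, Real.norm_eq_abs, abs_of_pos hpos0]
    -- denominator never vanishes
    have hdenne : ∀ w ∈ ball (0:ℂ) 1, (1 - (starRingEnd ℂ) c * h w) ≠ 0 := by
      intro w hw hcon
      have h1 : ‖(starRingEnd ℂ) c * h w‖ ≤ ‖c‖ := by
        rw [norm_mul, Complex.norm_conj]
        calc ‖c‖ * ‖h w‖ ≤ ‖c‖ * 1 :=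
              mul_le_mul_of_nonneg_left (hhb w hw) (norm_nonneg c)
          _ = ‖c‖ := mul_one _
      have h2 : (starRingEnd ℂ) c * h w = 1 := by linear_combination -hcon
      rw [h2] at h1
      simp at h1
      linarith
    set G : ℂ → ℂ := fun w => (h w - c) / (1 - (starRingEnd ℂ) c * h w) with hG
    have hGdiff : DifferentiableOn ℂ G (ball (0:ℂ) 1) :=
      DifferentiableOn.div (hdiff.sub_const c)
        ((differentiableOn_const 1).sub ((differentiableOn_const _).mul hdiff)) hdenne
    have hG0 : G 0 = 0 := by
      rw [hG]
      simp only [hh0, ← hcdef, sub_self, zero_div]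
    have hGb : ∀ w ∈ ball (0:ℂ) 1, ‖G w‖ ≤ 1 := by
      intro w hw
      rw [hG]
      simp only [norm_div]
      rw [div_le_one_iff]
      left
      constructor
      · exact norm_pos_iff.mpr (hdenne w hw)
      · -- |h w - c| ≤ |1 - conj c * h w|
        have hwnorm : Complex.normSq (h w) ≤ 1 := by
          rw [Complex.normSq_eq_norm_sq]
          nlinarith [hhb w hw, norm_nonneg (h w)]
        exact mobius_bound (h w) c hwnorm hnsq.le
    -- Schwarz lemma applied to G
    have hSch : ∀ R : ℝ, 1 < R → ‖deriv G 0‖ ≤ R := by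
      intro R hR
      have hmaps : Set.MapsTo G (ball (0:ℂ) 1) (ball (G 0) R) := by
        intro w hw
        rw [mem_ball, dist_eq_norm, hG0, sub_zero]
        exact lt_of_le_of_lt (hGb w hw) hR
      have := Complex.norm_deriv_le_div_of_mapsTo_ball hGdiff
        (hmaps.mono_right ball_subset_closedBall) one_pos
      simpa using this
    have hSch1 : ‖deriv G 0‖ ≤ 1 := by
      by_contra hcon
      push_neg at hcon
      have := hSch ((1 + ‖deriv G 0‖) / 2) (by linarith)
      linarith
    -- compute deriv G 0
    have hval : (p 1 fun _ => (1:ℂ)) = a k := by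
      rw [hp, FormalMultilinearSeries.ofScalars_apply_eq, smul_eq_mul]
      simp
    have hdh : HasDerivAt h (a k) 0 := by
      have := hps.hasFPowerSeriesAt.hasDerivAt
      rwa [hval] at this
    have hnum : HasDerivAt (fun w => h w - c) (a k) 0 := hdh.sub_const c
    have hden : HasDerivAt (fun w => 1 - (starRingEnd ℂ) c * h w)
        (-((starRingEnd ℂ) c * a k)) 0 := by
      simpa using ((hdh.const_mul ((starRingEnd ℂ) c)).const_sub 1)
    have hD0 : (1 - (starRingEnd ℂ) c * h 0) = d := by rw [hh0]
    have hGd : HasDerivAt G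
        ((a k * (1 - (starRingEnd ℂ) c * h 0) - (h 0 - c) * (-((starRingEnd ℂ) c * a k)))
          / (1 - (starRingEnd ℂ) c * h 0) ^ 2) 0 :=
      hnum.div hden (by rw [hD0]; exact hdne)
    have hG'val : deriv G 0 = a k / d := by
      rw [hGd.deriv, hD0, hh0, sub_self, zero_mul, sub_zero, sq]
      rw [mul_comm (a k) d, mul_div_mul_left _ _ hdne]
    rw [hG'val, norm_div, habsd] at hSch1
    rw [div_le_one hpos0] at hSch1
    exact hSch1

/-- Area bound via Wiener's inequality: if `f` is analytic on the unit disk with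
`|f| ≤ 1`, then for `0 ≤ r < 1`,
`S_r/π = ∑_{k=1}^∞ k |a_k|^2 r^{2k} ≤ (1-|a_0|^2)^2 r^2 / (1-r^2)^2`. -/
theorem area_bound (f : ℂ → ℂ) (a : ℕ → ℂ)
    (hf : AnalyticOn ℂ f (ball (0:ℂ) 1))
    (hsum : ∀ z ∈ ball (0:ℂ) 1, HasSum (fun k : ℕ => a k * z ^ k) (f z))
    (hbound : ∀ z ∈ ball (0:ℂ) 1, ‖f z‖ ≤ 1)
    (r : ℝ) (hr0 : 0 ≤ r) (hr1 : r < 1) :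
    ∑' k : ℕ, (k : ℝ) * ‖a k‖ ^ 2 * r ^ (2 * k) ≤
      (1 - ‖a 0‖ ^ 2) ^ 2 * r ^ 2 / (1 - r ^ 2) ^ 2 := by
  have h01 : (0:ℂ) ∈ ball (0:ℂ) 1 := mem_ball_self one_pos
  -- a 0 = f 0
  have hf0 : f 0 = a 0 := by
    have h1 := hsum 0 h01
    have h2 : HasSum (fun n : ℕ => a n * (0:ℂ) ^ n) (a 0) := by
      have : (fun n : ℕ => a n * (0:ℂ) ^ n) = fun n => if n = 0 then a 0 else 0 := by
        funext n; cases n <;> simp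
      rw [this]
      exact hasSum_ite_eq 0 (a 0)
    exact h1.unique h2
  have ha0 : ‖a 0‖ ≤ 1 := hf0 ▸ hbound 0 h01
  set B : ℝ := 1 - ‖a 0‖ ^ 2 with hB
  have hB0 : 0 ≤ B := by
    have : ‖a 0‖ ^ 2 ≤ 1 := by
      nlinarith [norm_nonneg (a 0)]
    linarith
  have hB1 : B ≤ 1 := by nlinarith [norm_nonneg (a 0)]
  have hx0 : 0 ≤ r ^ 2 := sq_nonneg r
  have hx1 : r ^ 2 < 1 := by nlinarith
  -- termwise bound
  have hterm : ∀ n : ℕ, (n : ℝ) * (‖a n‖) ^ 2 * r ^ (2 * n) ≤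
      (n : ℝ) * B ^ 2 * (r ^ 2) ^ n := by
    intro n
    rcases Nat.eq_zero_or_pos n with h | h
    · simp [h]
    · have hw := wiener f a hsum hbound n h
      have h1 : (‖a n‖) ^ 2 ≤ B ^ 2 := by
        nlinarith [norm_nonneg (a n)]
      have h2 : r ^ (2 * n) = (r ^ 2) ^ n := by rw [pow_mul]
      rw [h2]
      have hp : (0:ℝ) ≤ (r ^ 2) ^ n := pow_nonneg hx0 n
      have hn : (0:ℝ) ≤ (n:ℝ) := Nat.cast_nonneg n
      exact mul_le_mul_of_nonneg_right (mul_le_mul_of_nonneg_left h1 hn) hp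
  have hgsum : Summable (fun n : ℕ => (n : ℝ) * B ^ 2 * (r ^ 2) ^ n) := by
    have := summable_pow_mul_geometric_of_norm_lt_one (R := ℝ) 1
      (r := r ^ 2) (by rwa [Real.norm_eq_abs, abs_of_nonneg hx0])
    simpa [pow_one, mul_comm, mul_assoc, mul_left_comm] using this.mul_left (B ^ 2)
  have hfsum : Summable (fun n : ℕ => (n : ℝ) * (‖a n‖) ^ 2 * r ^ (2 * n)) := by
    refine Summable.of_nonneg_of_le (fun n => ?_) hterm hgsum
    positivity
  have hle := Summable.tsum_le_tsum hterm hfsum hgsum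
  have hgeo : ∑' n : ℕ, (n : ℝ) * B ^ 2 * (r ^ 2) ^ n = B ^ 2 * (r ^ 2 / (1 - r ^ 2) ^ 2) := by
    have h := tsum_coe_mul_geometric_of_norm_lt_one (r := r ^ 2)
      (by rwa [Real.norm_eq_abs, abs_of_nonneg hx0])
    calc ∑' n : ℕ, (n : ℝ) * B ^ 2 * (r ^ 2) ^ n
        = B ^ 2 * ∑' n : ℕ, (n : ℝ) * (r ^ 2) ^ n := by
          rw [← tsum_mul_left]; congr 1; funext n; ring
      _ = B ^ 2 * (r ^ 2 / (1 - r ^ 2) ^ 2) := by rw [h]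
  rw [hgeo] at hle
  calc ∑' n : ℕ, (n : ℝ) * (‖a n‖) ^ 2 * r ^ (2 * n)
      ≤ B ^ 2 * (r ^ 2 / (1 - r ^ 2) ^ 2) := hle
    _ = B ^ 2 * r ^ 2 / (1 - r ^ 2) ^ 2 := by ring
end

section
/- Let f be analytic and univalent (injective) on the open unit disk D such that Ω = f(D) is a convex domain, and let g(z) = ∑_{k=0}^∞ b_k z^k be analytic on D and subordinate to f. Then for all r ≤ 1/5 and every z ∈ ℂ with |z| = r: |g(z)| + ∑_{k=1}^∞ |b_k| r^k ≤ |f(0)| + dist(f(0), ∂Ω), where dist(f(0), ∂Ω) is the Euclidean distance from f(0) to the boundary of Ω. -/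
open Metric MeasureTheory Set Filter Complex intervalIntegral
open scoped Real Topology

noncomputable section

private lemma fourier_aux (m : ℤ) :
    ∫ θ in (0:ℝ)..(2*π), Complex.exp ((m * Complex.I) * θ) =
      if m = 0 then ((2*π : ℝ) : ℂ) else 0 := by
  rcases eq_or_ne m 0 with h|h
  · simp [h]
  · rw [if_neg h, integral_exp_mul_complex (by simp [h, Complex.I_ne_zero] : (m:ℂ)*Complex.I ≠ 0)]
    have h2 : (m:ℂ) * Complex.I * ((2*π:ℝ):ℂ) = m * (2*π*Complex.I) := by push_cast; ring
    rw [h2, Complex.exp_int_mul_two_pi_mul_I]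
    simp

private lemma summable_coeff {φ : ℂ → ℂ} {a : ℕ → ℂ}
    (hsum : ∀ z ∈ ball (0:ℂ) 1, HasSum (fun k : ℕ => a k * z ^ k) (φ z))
    {ρ : ℝ} (h0 : 0 ≤ ρ) (h1 : ρ < 1) :
    Summable (fun k : ℕ => ‖a k‖ * ρ ^ k) := by
  set ρ' : ℝ := (1 + ρ) / 2 with hρ'def
  have hρ'0 : 0 < ρ' := by simp only [hρ'def]; linarith
  have hρ'1 : ρ' < 1 := by simp only [hρ'def]; linarith
  have hρρ' : ρ < ρ' := by simp only [hρ'def]; linarith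
  have hz : (ρ' : ℂ) ∈ ball (0:ℂ) 1 := by
    simp [abs_of_pos hρ'0, hρ'1]
  have hs := (hsum _ hz).summable
  obtain ⟨C, hC⟩ := hs.tendsto_atTop_zero.norm.bddAbove_range
  have hCnn : ∀ k : ℕ, ‖a k‖ * ρ' ^ k ≤ C := by
    intro k
    have := hC (Set.mem_range_self (f := fun k => ‖a k * (ρ':ℂ)^k‖) k)
    simpa [abs_of_pos hρ'0, abs_pow] using this
  have hgeo : Summable (fun k : ℕ => C * (ρ/ρ')^k) :=
    (summable_geometric_of_lt_one (by positivity) (by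
      rw [div_lt_one hρ'0]; exact hρρ')).mul_left C
  refine Summable.of_nonneg_of_le (fun k => by positivity) (fun k => ?_) hgeo
  have heq : ‖a k‖ * ρ ^ k = (‖a k‖ * ρ' ^ k) * (ρ/ρ')^k := by
    field_simp
    rw [mul_assoc, ← mul_pow, mul_div_assoc', mul_div_cancel_left₀ _ hρ'0.ne']
  rw [heq]
  exact mul_le_mul_of_nonneg_right (hCnn k) (by positivity)

private lemma caratheodory_coeff {φ : ℂ → ℂ} {a : ℕ → ℂ}
    (hsum : ∀ z ∈ ball (0:ℂ) 1, HasSum (fun k : ℕ => a k * z ^ k) (φ z))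
    (hre : ∀ z ∈ ball (0:ℂ) 1, 0 ≤ (φ z).re)
    {n : ℕ} (hn : 1 ≤ n) : ‖a n‖ ≤ 2 * (a 0).re := by
  have hπ : (0:ℝ) < 2*π := by positivity
  have key : ∀ ρ : ℝ, 0 < ρ → ρ < 1 → ‖a n‖ * ρ^n ≤ 2 * (a 0).re := by
    intro ρ hρ0 hρ1
    set μ : Measure ℝ := volume.restrict (Set.Ioc (0:ℝ) (2*π)) with hμ
    set E : ℤ → ℝ → ℂ := fun m θ => Complex.exp ((m * Complex.I) * θ) with hE
    have hEnorm : ∀ (m : ℤ) (θ : ℝ), ‖E m θ‖ = 1 := by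
      intro m θ
      simp only [hE, Complex.norm_exp]
      norm_num [Complex.mul_re, Complex.mul_im]
    have hEcont : ∀ m : ℤ, Continuous (E m) := by
      intro m
      exact Complex.continuous_exp.comp (by continuity)
    have hEadd : ∀ (j l : ℤ) (θ : ℝ), E j θ * E l θ = E (j+l) θ := by
      intro j l θ
      simp only [hE, ← Complex.exp_add]
      congr 1
      push_cast
      ring
    have hE0 : ∀ θ : ℝ, E 0 θ = 1 := by
      intro θ; simp [hE]
    have hEconj : ∀ (m : ℤ) (θ : ℝ), (starRingEnd ℂ) (E m θ) = E (-m) θ := by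
      intro m θ
      simp only [hE, ← Complex.exp_conj]
      congr 1
      calc (starRingEnd ℂ) (((m:ℤ):ℂ) * Complex.I * (θ:ℝ))
          = ((m:ℤ):ℂ) * (-Complex.I) * (θ:ℝ) := by
            simp [map_mul, Complex.conj_I, Complex.conj_ofReal]
        _ = ((-m:ℤ):ℂ) * Complex.I * (θ:ℝ) := by push_cast; ring
    have hEint : ∀ m : ℤ, ∫ θ, E m θ ∂μ = if m = 0 then ((2*π:ℝ):ℂ) else 0 := by
      intro m
      rw [hμ, ← intervalIntegral.integral_of_le (by positivity)]
      exact fourier_aux m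
    -- the circle map
    set zm : ℝ → ℂ := fun θ => (ρ:ℂ) * Complex.exp (Complex.I * θ) with hzm
    have hzball : ∀ θ : ℝ, zm θ ∈ ball (0:ℂ) 1 := by
      intro θ
      simp only [hzm, mem_ball, dist_zero_right, norm_mul, Complex.norm_real,
        Complex.norm_exp, Real.norm_eq_abs, abs_of_pos hρ0]
      norm_num [Complex.mul_re, Complex.mul_im]
      exact hρ1
    have hzk : ∀ (k : ℕ) (θ : ℝ), (zm θ)^k = ((ρ:ℂ))^k * E (k:ℤ) θ := by
      intro k θ
      simp only [hzm, mul_pow, ← Complex.exp_nat_mul]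
      congr 2
      push_cast
      ring
    -- summability of coefficient norms
    have hsumnorm : Summable (fun k : ℕ => ‖a k‖ * ρ ^ k) :=
      summable_coeff hsum hρ0.le hρ1
    -- generic term-by-term integration
    have main : ∀ (c : ℕ → ℂ) (m : ℕ → ℤ) (ψ : ℝ → ℂ),
        Summable (fun k => ‖c k‖) →
        (∀ θ, HasSum (fun k => c k * E (m k) θ) (ψ θ)) →
        ∫ θ, ψ θ ∂μ = ∑' k : ℕ, (c k * (if m k = 0 then ((2*π:ℝ):ℂ) else 0)) := by
      intro c m ψ hc hψ
      have hint : ∀ k : ℕ, Integrable (fun θ => c k * E (m k) θ) μ := by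
        intro k
        exact (continuous_const.mul (hEcont (m k))).integrableOn_Ioc
      have hnorms : ∀ k : ℕ, (∫ θ, ‖c k * E (m k) θ‖ ∂μ) = ‖c k‖ * (2*π) := by
        intro k
        have : (fun θ => ‖c k * E (m k) θ‖) = fun _ => ‖c k‖ := by
          funext θ; rw [norm_mul, hEnorm, mul_one]
        rw [this, hμ]
        simp only [MeasureTheory.setIntegral_const, smul_eq_mul, Real.volume_Ioc]
        rw [measureReal_def, Real.volume_Ioc, sub_zero, ENNReal.toReal_ofReal hπ.le, mul_comm]
      have hsummable : Summable (fun k : ℕ => ∫ θ, ‖c k * E (m k) θ‖ ∂μ) := by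
        simp only [hnorms]
        exact hc.mul_right _
      have swap := MeasureTheory.integral_tsum_of_summable_integral_norm hint hsummable
      have h1 : (fun θ => ∑' k : ℕ, c k * E (m k) θ) = ψ := by
        funext θ; exact (hψ θ).tsum_eq
      rw [h1] at swap
      rw [← swap]
      congr 1
      funext k
      rw [MeasureTheory.integral_const_mul, hEint]
    -- continuity of φ ∘ zm
    have hφeq : (fun θ => φ (zm θ)) = fun θ => ∑' k : ℕ, a k * (zm θ)^k :=
      funext fun θ => ((hsum _ (hzball θ)).tsum_eq).symm
    have hφcont : Continuous (fun θ => φ (zm θ)) := by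
      rw [hφeq]
      apply continuous_tsum (u := fun k => ‖a k‖ * ρ ^ k)
      · intro k
        exact continuous_const.mul ((continuous_const.mul
          (Complex.continuous_exp.comp (by continuity))).pow k)
      · exact hsumnorm
      · intro k θ
        rw [hzk, ← mul_assoc, norm_mul, norm_mul, hEnorm, mul_one]
        simp [abs_of_pos hρ0]
    -- key integrals
    have key1 : ∀ j : ℕ, ∫ θ, φ (zm θ) * E (-(j:ℤ)) θ ∂μ
        = a j * ((ρ:ℂ))^j * ((2*π:ℝ):ℂ) := by
      intro j
      have hS : ∀ θ : ℝ, HasSum (fun k : ℕ => (a k * (ρ:ℂ)^k) * E ((k:ℤ) - j) θ)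
          (φ (zm θ) * E (-(j:ℤ)) θ) := by
        intro θ
        have h := (hsum _ (hzball θ)).mul_right (E (-(j:ℤ)) θ)
        have heq : (fun k : ℕ => a k * (zm θ)^k * E (-(j:ℤ)) θ)
            = fun k : ℕ => (a k * (ρ:ℂ)^k) * E ((k:ℤ) - j) θ := by
          funext k
          rw [hzk, show (k:ℤ) - j = (k:ℤ) + (-(j:ℤ)) by ring, ← hEadd]
          ring
        rwa [heq] at h
      have hc : Summable (fun k : ℕ => ‖a k * (ρ:ℂ)^k‖) := by
        refine hsumnorm.congr fun k => ?_
        rw [norm_mul, norm_pow, Complex.norm_real, Real.norm_eq_abs, abs_of_pos hρ0]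
      rw [main _ _ _ hc hS]
      rw [tsum_eq_single j ?_]
      · rw [if_pos (by simp)]
      · intro k hk
        rw [if_neg (by omega), mul_zero]
    have key2 : ∀ j : ℕ, ∫ θ, (starRingEnd ℂ) (φ (zm θ)) * E (-(j:ℤ)) θ ∂μ
        = (if j = 0 then (starRingEnd ℂ) (a 0) * ((2*π:ℝ):ℂ) else 0) := by
      intro j
      have hS : ∀ θ : ℝ, HasSum (fun k : ℕ => ((starRingEnd ℂ) (a k) * (ρ:ℂ)^k) * E (-(k:ℤ) - j) θ)
          ((starRingEnd ℂ) (φ (zm θ)) * E (-(j:ℤ)) θ) := by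
        intro θ
        have h := ((hsum _ (hzball θ)).star).mul_right (E (-(j:ℤ)) θ)
        have heq : (fun k : ℕ => star (a k * (zm θ)^k) * E (-(j:ℤ)) θ)
            = fun k : ℕ => ((starRingEnd ℂ) (a k) * (ρ:ℂ)^k) * E (-(k:ℤ) - j) θ := by
          funext k
          calc star (a k * (zm θ)^k) * E (-(j:ℤ)) θ
              = (starRingEnd ℂ) (a k) * ((ρ:ℂ)^k * E (-(k:ℤ)) θ) * E (-(j:ℤ)) θ := by
                rw [hzk]
                simp only [star_mul', star_pow, Complex.star_def, map_mul, map_pow,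
                  Complex.conj_ofReal, hEconj]
            _ = ((starRingEnd ℂ) (a k) * (ρ:ℂ)^k) * E (-(k:ℤ) - j) θ := by
                rw [show -(k:ℤ) - j = -(k:ℤ) + (-(j:ℤ)) by ring, ← hEadd]
                ring
        have h2 : (starRingEnd ℂ) (φ (zm θ)) = star (φ (zm θ)) := rfl
        rw [h2]
        rwa [heq] at h
      have hc2 : Summable (fun k : ℕ => ‖(starRingEnd ℂ) (a k) * (ρ:ℂ)^k‖) := by
        refine hsumnorm.congr fun k => ?_
        rw [norm_mul, norm_pow, Complex.norm_real, Real.norm_eq_abs, abs_of_pos hρ0,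
          RCLike.norm_conj]
      rw [main _ _ _ hc2 hS]
      by_cases hj : j = 0
      · subst hj
        rw [tsum_eq_single 0 ?_]
        · rw [if_pos (by simp), if_pos rfl]
          simp
        · intro k hk
          rw [if_neg (by omega), mul_zero]
      · rw [if_neg hj]
        have hzero : ∀ k : ℕ, ((starRingEnd ℂ) (a k) * (ρ:ℂ)^k) * (if (-(k:ℤ) - j = 0) then ((2*π:ℝ):ℂ) else 0) = 0 := by
          intro k
          rw [if_neg (by omega), mul_zero]
        simp only [hzero]
        exact tsum_zero
    -- integrability
    have hφint : Integrable (fun θ => φ (zm θ) * E (-(n:ℤ)) θ) μ :=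
      (hφcont.mul (hEcont _)).integrableOn_Ioc
    have hφint' : Integrable (fun θ => (starRingEnd ℂ) (φ (zm θ)) * E (-(n:ℤ)) θ) μ :=
      ((continuous_star.comp hφcont).mul (hEcont _)).integrableOn_Ioc
    -- the n-th moment identity with the real part
    have hptw : ∀ (j : ℕ) (θ : ℝ), (((2:ℝ) * (φ (zm θ)).re : ℝ) : ℂ) * E (-(j:ℤ)) θ
        = φ (zm θ) * E (-(j:ℤ)) θ + (starRingEnd ℂ) (φ (zm θ)) * E (-(j:ℤ)) θ := by
      intro j θ
      rw [← add_mul, Complex.add_conj]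
    have hsum2 : ∫ θ, (((2:ℝ) * (φ (zm θ)).re : ℝ) : ℂ) * E (-(n:ℤ)) θ ∂μ
        = a n * ((ρ:ℂ))^n * ((2*π:ℝ):ℂ) := by
      have : (fun θ => (((2:ℝ) * (φ (zm θ)).re : ℝ) : ℂ) * E (-(n:ℤ)) θ)
          = fun θ => φ (zm θ) * E (-(n:ℤ)) θ + (starRingEnd ℂ) (φ (zm θ)) * E (-(n:ℤ)) θ :=
        funext (hptw n)
      rw [this, MeasureTheory.integral_add hφint hφint', key1 n, key2 n, if_neg (by omega), add_zero]
    -- the real integral of 2 * re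
    have hTint : Integrable (fun θ => (2:ℝ) * (φ (zm θ)).re) μ :=
      (continuous_const.mul (Complex.continuous_re.comp hφcont)).integrableOn_Ioc
    have hT : ∫ θ, ((2:ℝ) * (φ (zm θ)).re) ∂μ = 2 * (a 0).re * (2*π) := by
      have h0 : ∫ θ, (((2:ℝ) * (φ (zm θ)).re : ℝ) : ℂ) * E (-(0:ℕ):ℤ) θ ∂μ
          = a 0 * ((ρ:ℂ))^0 * ((2*π:ℝ):ℂ) + (starRingEnd ℂ) (a 0) * ((2*π:ℝ):ℂ) := by
        have : (fun θ => (((2:ℝ) * (φ (zm θ)).re : ℝ) : ℂ) * E (-(0:ℕ):ℤ) θ)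
            = fun θ => φ (zm θ) * E (-(0:ℕ):ℤ) θ + (starRingEnd ℂ) (φ (zm θ)) * E (-(0:ℕ):ℤ) θ :=
          funext (hptw 0)
        have i1 : Integrable (fun θ => φ (zm θ) * E (-(0:ℕ):ℤ) θ) μ :=
          (hφcont.mul (hEcont _)).integrableOn_Ioc
        have i2 : Integrable (fun θ => (starRingEnd ℂ) (φ (zm θ)) * E (-(0:ℕ):ℤ) θ) μ :=
          ((continuous_star.comp hφcont).mul (hEcont _)).integrableOn_Ioc
        rw [this, MeasureTheory.integral_add i1 i2, key1 0, key2 0, if_pos rfl]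
      have hE00 : ∀ θ : ℝ, E (-(0:ℕ):ℤ) θ = 1 := by
        intro θ
        rw [show (-(0:ℕ):ℤ) = 0 by norm_num, hE0]
      have h1 : ∫ θ, (((2:ℝ) * (φ (zm θ)).re : ℝ) : ℂ) * E (-(0:ℕ):ℤ) θ ∂μ
          = ((∫ θ, ((2:ℝ) * (φ (zm θ)).re) ∂μ : ℝ) : ℂ) := by
        simp only [hE00, mul_one]
        exact integral_ofReal
      rw [h1] at h0
      have h2 : ((∫ θ, ((2:ℝ) * (φ (zm θ)).re) ∂μ : ℝ) : ℂ) = ((2 * (a 0).re * (2*π) : ℝ) : ℂ) := by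
        rw [h0]
        rw [pow_zero, mul_one, ← add_mul, Complex.add_conj]
        push_cast
        ring
      exact_mod_cast h2
    -- norm bound
    have hb := MeasureTheory.norm_integral_le_integral_norm
      (f := fun θ => (((2:ℝ) * (φ (zm θ)).re : ℝ) : ℂ) * E (-(n:ℤ)) θ) (μ := μ)
    rw [hsum2] at hb
    have hnormpt : (fun θ => ‖(((2:ℝ) * (φ (zm θ)).re : ℝ) : ℂ) * E (-(n:ℤ)) θ‖)
        = fun θ => (2:ℝ) * (φ (zm θ)).re := by
      funext θ
      rw [norm_mul, hEnorm, mul_one, Complex.norm_real, Real.norm_eq_abs]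
      exact abs_of_nonneg (by
        have := hre _ (hzball θ)
        positivity)
    rw [hnormpt, hT] at hb
    have hb2 : ‖a n * ((ρ:ℂ))^n * ((2*π:ℝ):ℂ)‖ = (‖a n‖ * ρ^n) * (2*π) := by
      rw [norm_mul, norm_mul, norm_pow, Complex.norm_real, Real.norm_eq_abs,
        Complex.norm_real, Real.norm_eq_abs, abs_of_pos hρ0, abs_of_pos hπ]
    rw [hb2] at hb
    calc ‖a n‖ * ρ^n = (‖a n‖ * ρ^n) * (2*π) / (2*π) := by field_simp
      _ ≤ (2 * (a 0).re * (2*π)) / (2*π) := by gcongr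
      _ = 2 * (a 0).re := by field_simp
  -- limit as ρ → 1⁻
  have hcont2 : Tendsto (fun ρ : ℝ => ‖a n‖ * ρ^n) (𝓝[<] (1:ℝ)) (𝓝 (‖a n‖ * 1^n)) :=
    ((continuous_const.mul (continuous_pow n)).tendsto 1).mono_left nhdsWithin_le_nhds
  have hfin : ‖a n‖ * 1^n ≤ 2 * (a 0).re := by
    refine le_of_tendsto hcont2 ?_
    filter_upwards [Ioo_mem_nhdsLT_of_mem (show (1:ℝ) ∈ Set.Ioc 0 1 by norm_num)] with ρ hρ
    exact key ρ hρ.1 hρ.2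
  simpa using hfin

private lemma no_univalent_onto (f : ℂ → ℂ)
    (hf : AnalyticOnNhd ℂ f (ball (0:ℂ) 1))
    (hinj : Set.InjOn f (ball (0:ℂ) 1))
    (hsurj : f '' ball (0:ℂ) 1 = Set.univ) : False := by
  have hball : IsOpen (ball (0:ℂ) 1) := isOpen_ball
  have h0 : (0:ℂ) ∈ ball (0:ℂ) 1 := by
    simp [mem_ball, dist_zero_right]
  have h2 : ((1:ℂ)/2) ∈ ball (0:ℂ) 1 := by
    simp only [mem_ball, dist_zero_right]
    rw [show ((1:ℂ)/2) = ((1/2 : ℝ) : ℂ) by push_cast; ring]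
    rw [Complex.norm_real]
    norm_num
  have hne : f 0 ≠ f (1/2) := by
    intro h
    have := hinj h0 h2 h
    norm_num at this
  have hconn : IsPreconnected (ball (0:ℂ) 1) := (convex_ball _ _).isPreconnected
  have hopen : ∀ s ⊆ ball (0:ℂ) 1, IsOpen s → IsOpen (f '' s) := by
    rcases hf.is_constant_or_isOpen hconn with ⟨w, hw⟩ | h
    · exact absurd ((hw 0 h0).trans (hw _ h2).symm) hne
    · exact h
  -- global inverse
  have hex : ∀ w : ℂ, ∃ z, z ∈ ball (0:ℂ) 1 ∧ f z = w := by
    intro w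
    have hw : w ∈ f '' ball (0:ℂ) 1 := hsurj ▸ Set.mem_univ w
    rcases hw with ⟨z, hz, hfz⟩
    exact ⟨z, hz, hfz⟩
  choose h hmem hfh using hex
  have hleft : ∀ z ∈ ball (0:ℂ) 1, h (f z) = z := fun z hz => hinj (hmem _) hz (hfh _)
  -- continuity of h
  have hcont : Continuous h := by
    rw [continuous_iff_continuousAt]
    intro w U hU
    rw [Filter.mem_map]
    have hzU : h w ∈ interior U := mem_interior_iff_mem_nhds.mpr hU
    set V := interior U ∩ ball (0:ℂ) 1 with hV
    have hVopen : IsOpen V := isOpen_interior.inter hball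
    have hzV : h w ∈ V := ⟨hzU, hmem w⟩
    have hfVopen : IsOpen (f '' V) := hopen V Set.inter_subset_right hVopen
    have hwfV : w ∈ f '' V := ⟨h w, hzV, hfh w⟩
    apply Filter.mem_of_superset (hfVopen.mem_nhds hwfV)
    rintro x ⟨z, hzV', rfl⟩
    have hz' : h (f z) = z := hleft z hzV'.2
    simp only [Set.mem_preimage, hz']
    exact interior_subset hzV'.1
  -- derivative of f is analytic and not identically zero
  have hdiff : DifferentiableOn ℂ f (ball (0:ℂ) 1) :=
    fun z hz => (hf z hz).differentiableAt.differentiableWithinAt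
  have hderiv : AnalyticOnNhd ℂ (deriv f) (ball (0:ℂ) 1) := hf.deriv
  have hdnz : ¬ (∀ z ∈ ball (0:ℂ) 1, deriv f z = 0) := by
    intro hall
    apply hne
    apply (convex_ball (0:ℂ) 1).is_const_of_fderivWithin_eq_zero hdiff ?_ h0 h2
    intro x hx
    rw [fderivWithin_of_isOpen hball hx]
    apply ContinuousLinearMap.ext_ring
    rw [ContinuousLinearMap.zero_apply]
    have : fderiv ℂ f x 1 = deriv f x := rfl
    rw [this, hall x hx]
  -- zeros of deriv f are isolated
  have hdisc : ∀ z₀ ∈ ball (0:ℂ) 1, ∀ᶠ z in 𝓝[≠] z₀, deriv f z ≠ 0 := by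
    intro z₀ hz₀
    rcases (hderiv z₀ hz₀).eventually_eq_zero_or_eventually_ne_zero with hz | hz
    · exfalso
      apply hdnz
      exact fun z hz' => hderiv.eqOn_zero_of_preconnected_of_eventuallyEq_zero hconn hz₀ hz hz'
    · exact hz
  -- h is differentiable at points where deriv f (h w) ≠ 0
  have hdiffat : ∀ w : ℂ, deriv f (h w) ≠ 0 → DifferentiableAt ℂ h w := by
    intro w hw
    have hz : h w ∈ ball (0:ℂ) 1 := hmem w
    have hsd : HasStrictDerivAt f (deriv f (h w)) (h w) := by
      rcases hf _ hz with ⟨p, hp⟩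
      have := hp.hasStrictDerivAt
      have hd : HasDerivAt f (p 1 fun _ => 1) (h w) := this.hasDerivAt
      rwa [hd.deriv]
    have hg : ∀ᶠ x in 𝓝 (h w), h (f x) = x := by
      filter_upwards [hball.mem_nhds hz] with x hx
      exact hleft x hx
    have := hsd.to_local_left_inverse hw hg
    rw [hfh w] at this
    exact (show HasStrictDerivAt h _ w from this).hasDerivAt.differentiableAt
  -- punctured neighborhoods avoid the bad set
  have hpunct : ∀ w₀ : ℂ, ∀ᶠ w in 𝓝[≠] w₀, deriv f (h w) ≠ 0 := by
    intro w₀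
    have hz₀ : h w₀ ∈ ball (0:ℂ) 1 := hmem w₀
    have h1 := hdisc _ hz₀
    rw [eventually_nhdsWithin_iff] at h1
    have h2' : ∀ᶠ z in 𝓝 (h w₀), (z ∈ ({h w₀}ᶜ : Set ℂ) → deriv f z ≠ 0) ∧ z ∈ ball (0:ℂ) 1 :=
      h1.and (hball.eventually_mem hz₀)
    set t := {z : ℂ | (z ∈ ({h w₀}ᶜ : Set ℂ) → deriv f z ≠ 0) ∧ z ∈ ball (0:ℂ) 1} with ht
    have htnhds : t ∈ 𝓝 (h w₀) := h2'
    set U := interior t with hU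
    have hUopen : IsOpen U := isOpen_interior
    have hzU : h w₀ ∈ U := mem_interior_iff_mem_nhds.mpr htnhds
    have hUball : U ⊆ ball (0:ℂ) 1 := fun z hz => (interior_subset hz).2
    have hfUopen : IsOpen (f '' U) := hopen U hUball hUopen
    have hwfU : w₀ ∈ f '' U := ⟨h w₀, hzU, hfh w₀⟩
    rw [eventually_nhdsWithin_iff]
    filter_upwards [hfUopen.mem_nhds hwfU] with w hw hwne
    rcases hw with ⟨z, hzU', rfl⟩
    have hzt := interior_subset hzU'
    have hzz : h (f z) = z := hleft z hzt.2
    rw [hzz]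
    apply hzt.1
    intro hzeq
    apply hwne
    simp only [Set.mem_compl_iff, Set.mem_singleton_iff, not_not] at hzeq
    rw [hzeq, hfh]
    exact Set.mem_singleton _
  -- h is entire
  have hentire : Differentiable ℂ h := by
    intro w₀
    by_cases hw : deriv f (h w₀) ≠ 0
    · exact hdiffat w₀ hw
    · push_neg at hw
      have : AnalyticAt ℂ h w₀ := by
        apply Complex.analyticAt_of_differentiable_on_punctured_nhds_of_continuousAt
        · filter_upwards [hpunct w₀] with w hw'
          exact hdiffat w hw'
        · exact hcont.continuousAt
      exact this.differentiableAt
  -- h is bounded, hence constant — contradiction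
  have hbdd : Bornology.IsBounded (Set.range h) := by
    apply (Metric.isBounded_ball (x := (0:ℂ)) (r := 1)).subset
    rintro x ⟨w, rfl⟩
    exact hmem w
  have hconst := hentire.apply_eq_apply_of_bounded hbdd 0 1
  have : (0:ℂ) = 1 := by
    rw [← hfh 0, ← hfh 1, hconst]
  norm_num at this

set_option maxHeartbeats 2000000 in
/-- Theorem 8: if `f` is analytic and univalent on the unit disk with convex image
`Ω = f(𝔻)`, and `g` is analytic on `𝔻` and subordinate to `f`, then for
`|z| = r ≤ 1/5`, `|g(z)| + ∑_{k=1}^∞ |b_k| r^k ≤ |f(0)| + dist(f(0), ∂Ω)`. -/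
theorem bohr_rogosinski_subordination_convex (f g : ℂ → ℂ) (b : ℕ → ℂ)
    (hf : AnalyticOn ℂ f (ball (0:ℂ) 1))
    (hinj : Set.InjOn f (ball (0:ℂ) 1))
    (hconv : Convex ℝ (f '' ball (0:ℂ) 1))
    (hg : AnalyticOn ℂ g (ball (0:ℂ) 1))
    (hsub : ∃ ω : ℂ → ℂ, AnalyticOn ℂ ω (ball (0:ℂ) 1) ∧
      Set.MapsTo ω (ball (0:ℂ) 1) (ball (0:ℂ) 1) ∧ ω 0 = 0 ∧
      ∀ z ∈ ball (0:ℂ) 1, g z = f (ω z))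
    (hsum : ∀ z ∈ ball (0:ℂ) 1, HasSum (fun k : ℕ => b k * z ^ k) (g z))
    (r : ℝ) (hr : r ≤ 1/5)
    (z : ℂ) (hz : ‖z‖ = r) :
    ‖g z‖ + ∑' k : ℕ, ‖b (k + 1)‖ * r ^ (k + 1) ≤
      ‖f 0‖ + infDist (f 0) (frontier (f '' ball (0:ℂ) 1)) := by
  obtain ⟨ω, hω, hωmaps, hω0, hgf⟩ := hsub
  have h0mem : (0:ℂ) ∈ ball (0:ℂ) 1 := by simp
  have h2mem : ((1:ℂ)/2) ∈ ball (0:ℂ) 1 := by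
    simp only [mem_ball, dist_zero_right]
    rw [show ((1:ℂ)/2) = ((1/2 : ℝ) : ℂ) by push_cast; ring, Complex.norm_real]
    norm_num
  have hr0 : 0 ≤ r := hz ▸ norm_nonneg z
  have hr1 : r < 1 := lt_of_le_of_lt hr (by norm_num)
  have hzmem : z ∈ ball (0:ℂ) 1 := by
    simp only [mem_ball, dist_zero_right, hz]
    linarith
  set S := f '' ball (0:ℂ) 1 with hSdef
  set d := infDist (f 0) (frontier S) with hddef
  have hd0 : 0 ≤ d := infDist_nonneg
  -- b 0 = f 0
  have hg0 : g 0 = f 0 := by rw [hgf 0 h0mem, hω0]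
  have hb0 : b 0 = f 0 := by
    have h1 := hsum 0 h0mem
    have h2 : HasSum (fun k : ℕ => b k * (0:ℂ)^k) (b 0 * (0:ℂ)^0) :=
      hasSum_single 0 (fun k hk => by rw [zero_pow hk, mul_zero])
    have h3 := h1.unique h2
    rw [hg0] at h3
    simpa using h3.symm
  -- g maps the disk into S
  have hgS : ∀ ζ ∈ ball (0:ℂ) 1, g ζ ∈ S := by
    intro ζ hζ
    rw [hgf ζ hζ]
    exact ⟨ω ζ, hωmaps hζ, rfl⟩
  -- S is open
  have hfN : AnalyticOnNhd ℂ f (ball (0:ℂ) 1) :=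
    (isOpen_ball.analyticOn_iff_analyticOnNhd).mp hf
  have hne : f 0 ≠ f (1/2) := by
    intro h
    have := hinj h0mem h2mem h
    norm_num at this
  have hSopen : IsOpen S := by
    rcases hfN.is_constant_or_isOpen (convex_ball _ _).isPreconnected with ⟨w, hw⟩ | h
    · exact absurd ((hw 0 h0mem).trans (hw _ h2mem).symm) hne
    · exact h (ball (0:ℂ) 1) subset_rfl isOpen_ball
  -- key coefficient estimate
  have hb2d : ∀ n : ℕ, 1 ≤ n → ‖b n‖ ≤ 2 * d := by
    intro n hn
    by_cases hfr : frontier S = ∅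
    · exfalso
      have hclopen : IsClopen S := isClopen_iff_frontier_eq_empty.mpr hfr
      have huniv : S = Set.univ := hclopen.eq_univ ⟨f 0, 0, h0mem, rfl⟩
      exact no_univalent_onto f hfN hinj huniv
    · obtain ⟨p, hp, hdp⟩ := isClosed_frontier.exists_infDist_eq_dist
        (Set.nonempty_iff_ne_empty.mpr hfr) (f 0)
      have hpS : p ∉ S := by
        rw [hSopen.frontier_eq] at hp
        exact hp.2
      obtain ⟨l, hl⟩ := geometric_hahn_banach_open_point hconv hSopen hpS
      set v : ℂ := ((l 1 : ℝ) : ℂ) + ((l Complex.I : ℝ) : ℂ) * Complex.I with hvdef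
      have hlrep : ∀ w : ℂ, (w * (starRingEnd ℂ) v).re = l w := by
        intro w
        have hw : w = w.re • (1:ℂ) + w.im • Complex.I := by
          simp only [Complex.real_smul, mul_one]
          exact (Complex.re_add_im w).symm
        have h1 : l w = w.re * l 1 + w.im * l Complex.I := by
          conv_lhs => rw [hw]
          rw [map_add, ContinuousLinearMap.map_smul, ContinuousLinearMap.map_smul, smul_eq_mul, smul_eq_mul]
        rw [h1]
        simp only [hvdef, Complex.mul_re, Complex.conj_re, Complex.conj_im,
          Complex.add_re, Complex.add_im, Complex.ofReal_re, Complex.ofReal_im,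
          Complex.mul_re, Complex.mul_im, Complex.I_re, Complex.I_im]
        ring
      have hf0S : f 0 ∈ S := ⟨0, h0mem, rfl⟩
      have hvne : v ≠ 0 := by
        intro hv0
        have h1 := hl (f 0) hf0S
        have h2 : ∀ w : ℂ, l w = 0 := by
          intro w
          rw [← hlrep, hv0, map_zero, mul_zero, Complex.zero_re]
        rw [h2, h2] at h1
        exact lt_irrefl 0 h1
      have hvabs : (0:ℝ) < ‖v‖ := norm_pos_iff.mpr hvne
      set u : ℂ := v / ((‖v‖ : ℝ) : ℂ) with hudef
      have huabs : ‖u‖ = 1 := by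
        rw [hudef, norm_div, Complex.norm_real, norm_norm, div_self hvabs.ne']
      have hconju : (starRingEnd ℂ) u = (starRingEnd ℂ) v / ((‖v‖ : ℝ) : ℂ) := by
        rw [hudef, map_div₀, Complex.conj_ofReal]
      -- the separation inequality
      have hsep : ∀ w ∈ S, ((w - f 0) * (starRingEnd ℂ) u).re ≤ d := by
        intro w hw
        have e1 : ∀ x : ℂ, ((x - f 0) * (starRingEnd ℂ) u).re
            = (l x - l (f 0)) / ‖v‖ := by
          intro x
          rw [hconju, show (x - f 0) * ((starRingEnd ℂ) v / ((‖v‖ : ℝ) : ℂ))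
            = (x * (starRingEnd ℂ) v - f 0 * (starRingEnd ℂ) v) / ((‖v‖ : ℝ) : ℂ)
            by ring]
          rw [Complex.div_ofReal_re, Complex.sub_re, hlrep, hlrep]
        have h2 : ((w - f 0) * (starRingEnd ℂ) u).re < ((p - f 0) * (starRingEnd ℂ) u).re := by
          rw [e1, e1]
          have hlt := hl w hw
          gcongr
        have h3 : ((p - f 0) * (starRingEnd ℂ) u).re ≤ d := by
          calc ((p - f 0) * (starRingEnd ℂ) u).re ≤ ‖(p - f 0) * (starRingEnd ℂ) u‖ :=
                Complex.re_le_norm _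
            _ = ‖p - f 0‖ * 1 := by
                rw [norm_mul, RCLike.norm_conj, huabs]
            _ = dist (f 0) p := by
                rw [mul_one, dist_eq_norm, norm_sub_rev]
            _ = d := hdp.symm
        exact le_of_lt (lt_of_lt_of_le h2 h3)
      -- the positive real part function
      have hφsum : ∀ ζ ∈ ball (0:ℂ) 1, HasSum
          (fun k : ℕ => (if k = 0 then ((d : ℝ) : ℂ) else -(b k * (starRingEnd ℂ) u)) * ζ ^ k)
          (((d : ℝ) : ℂ) - (g ζ - f 0) * (starRingEnd ℂ) u) := by
        intro ζ hζ
        have h1 := (hsum ζ hζ).mul_right (-(starRingEnd ℂ) u)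
        have h2 : HasSum (fun k : ℕ => if k = 0 then (((d : ℝ) : ℂ) + f 0 * (starRingEnd ℂ) u) else 0)
            (((d : ℝ) : ℂ) + f 0 * (starRingEnd ℂ) u) := hasSum_ite_eq 0 _
        have h3 := h1.add h2
        have heq : (fun k : ℕ => b k * ζ ^ k * (-(starRingEnd ℂ) u) +
            (if k = 0 then (((d : ℝ) : ℂ) + f 0 * (starRingEnd ℂ) u) else 0))
            = fun k : ℕ => (if k = 0 then ((d : ℝ) : ℂ) else -(b k * (starRingEnd ℂ) u)) * ζ ^ k := by
          funext k
          rcases eq_or_ne k 0 with rfl | hk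
          · rw [if_pos rfl, if_pos rfl, pow_zero, hb0]
            ring
          · rw [if_neg hk, if_neg hk]
            ring
        rw [heq] at h3
        have hval : g ζ * (-(starRingEnd ℂ) u) + (((d : ℝ) : ℂ) + f 0 * (starRingEnd ℂ) u)
            = ((d : ℝ) : ℂ) - (g ζ - f 0) * (starRingEnd ℂ) u := by ring
        rwa [hval] at h3
      have hφre : ∀ ζ ∈ ball (0:ℂ) 1,
          0 ≤ (((d : ℝ) : ℂ) - (g ζ - f 0) * (starRingEnd ℂ) u).re := by
        intro ζ hζ
        have h1 := hsep (g ζ) (hgS ζ hζ)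
        simp only [Complex.sub_re, Complex.ofReal_re]
        linarith
      have hcar := caratheodory_coeff
        (φ := fun ζ => ((d : ℝ) : ℂ) - (g ζ - f 0) * (starRingEnd ℂ) u)
        (a := fun k => if k = 0 then ((d : ℝ) : ℂ) else -(b k * (starRingEnd ℂ) u))
        hφsum hφre hn
      have ha0 : ((if (0:ℕ) = 0 then ((d : ℝ) : ℂ) else -(b 0 * (starRingEnd ℂ) u)).re) = d := by
        rw [if_pos rfl, Complex.ofReal_re]
      have han : ‖(if n = 0 then ((d : ℝ) : ℂ) else -(b n * (starRingEnd ℂ) u))‖ = ‖b n‖ := by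
        rw [if_neg (by omega : n ≠ 0), norm_neg, norm_mul]
        have huc : ‖(starRingEnd ℂ) u‖ = 1 := by
          rw [RCLike.norm_conj, huabs]
        rw [huc, mul_one]
      rw [han, ha0] at hcar
      exact hcar
  -- final assembly
  have hgz := hsum z hzmem
  have hnormsum : Summable (fun k : ℕ => ‖b k‖ * r ^ k) := summable_coeff hsum hr0 hr1
  have hznorm : ‖z‖ = r := by rw [hz]
  have habs : ∀ k : ℕ, ‖b k * z ^ k‖ = ‖b k‖ * r ^ k := by
    intro k
    rw [norm_mul, norm_pow, hznorm]
  have hsummable2 : Summable (fun k : ℕ => ‖b k * z ^ k‖) :=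
    hnormsum.congr fun k => (habs k).symm
  have hgz_le : ‖g z‖ ≤ ∑' k : ℕ, ‖b k‖ * r ^ k := by
    calc ‖g z‖ = ‖∑' k : ℕ, b k * z ^ k‖ := by rw [hgz.tsum_eq]
      _ ≤ ∑' k : ℕ, ‖b k * z ^ k‖ := norm_tsum_le_tsum_norm hsummable2
      _ = ∑' k : ℕ, ‖b k‖ * r ^ k := tsum_congr habs
  have hTsum : Summable (fun k : ℕ => ‖b (k + 1)‖ * r ^ (k + 1)) :=
    (summable_nat_add_iff 1).mpr hnormsum
  have hsplit : ∑' k : ℕ, ‖b k‖ * r ^ k = ‖b 0‖ * r ^ 0 + ∑' k : ℕ, ‖b (k+1)‖ * r ^ (k+1) :=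
    Summable.tsum_eq_zero_add hnormsum
  have hgeo : Summable (fun k : ℕ => 2 * d * r ^ (k + 1)) := by
    apply Summable.mul_left
    exact (summable_nat_add_iff 1).mpr (summable_geometric_of_lt_one hr0 hr1)
  have hTle : (∑' k : ℕ, ‖b (k+1)‖ * r ^ (k+1)) ≤ 2 * d * (r / (1 - r)) := by
    have h1 : (∑' k : ℕ, ‖b (k+1)‖ * r ^ (k+1)) ≤ ∑' k : ℕ, 2 * d * r ^ (k+1) := by
      apply Summable.tsum_le_tsum ?_ hTsum hgeo
      intro k
      exact mul_le_mul_of_nonneg_right (hb2d (k+1) (by omega)) (by positivity)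
    have h2 : ∑' k : ℕ, 2 * d * r ^ (k+1) = 2 * d * (r / (1 - r)) := by
      rw [tsum_mul_left]
      congr 1
      have hps : ∀ k : ℕ, r ^ (k+1) = r * r ^ k := fun k => by rw [pow_succ]; ring
      rw [tsum_congr hps, tsum_mul_left, tsum_geometric_of_lt_one hr0 hr1, div_eq_mul_inv]
    rw [h2] at h1
    exact h1
  have h1r : (0:ℝ) < 1 - r := by linarith
  have hq : r / (1 - r) ≤ 1 / 4 := by
    rw [div_le_div_iff₀ h1r (by norm_num)]
    linarith
  have hfinal : 2 * (2 * d * (r / (1 - r))) ≤ d := by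
    have h4 : 0 ≤ r / (1 - r) := by positivity
    nlinarith
  calc ‖g z‖ + ∑' k : ℕ, ‖b (k+1)‖ * r ^ (k+1)
      ≤ (‖b 0‖ * r ^ 0 + ∑' k : ℕ, ‖b (k+1)‖ * r ^ (k+1))
          + ∑' k : ℕ, ‖b (k+1)‖ * r ^ (k+1) := by
        rw [← hsplit]
        exact add_le_add hgz_le le_rfl
    _ = ‖f 0‖ + 2 * (∑' k : ℕ, ‖b (k+1)‖ * r ^ (k+1)) := by
        rw [hb0, pow_zero, mul_one]
        ring
    _ ≤ ‖f 0‖ + 2 * (2 * d * (r / (1 - r))) := by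
        have h5 := mul_le_mul_of_nonneg_left hTle (by norm_num : (0:ℝ) ≤ 2)
        linarith
    _ ≤ ‖f 0‖ + d := by linarith

end
end
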